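/- Let G be a finite group, p a prime, and P a Sylow p-subgroup of G. Then |𝔘_p(G)| = Σ_{x ∈ P} n_p(G)/λ_G(x), where the sum is of rational numbers (each λ_G(x) is nonzero since x lies in some Sylow p-subgroup). -/

import Mathlib

open Subgroup

/-- `λ_G(x)`: the number of Sylow `p`-subgroups of `G` containing `x`. -/
noncomputable def sylCount (p : ℕ) {G : Type*} [Group G] (x : G) : ℕ :=
  Nat.card {Q : Sylow p G // x ∈ Q}


lemma sylCount_pos_iff_aux {G : Type*} [Group G] [Fintype G] {p : ℕ} [Fact p.Prime] (x : G) :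
    0 < sylCount p x ↔ ∃ n, orderOf x = p ^ n := by
  rw [sylCount, Nat.card_pos_iff]
  constructor
  · rintro ⟨⟨Q, hQ⟩, -⟩
    obtain ⟨k, hk⟩ := Q.2 ⟨x, hQ⟩
    have hk' : x ^ p ^ k = 1 := by
      have := congrArg (Subtype.val) hk
      simpa using this
    obtain ⟨m, -, hm⟩ := (Nat.dvd_prime_pow (Fact.out)).mp (orderOf_dvd_of_pow_eq_one hk')
    exact ⟨m, hm⟩
  · rintro ⟨n, hn⟩
    have hpg : IsPGroup p (Subgroup.zpowers x) := by
      intro g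
      refine ⟨n, Subtype.ext ?_⟩
      obtain ⟨m, hm⟩ := g.2
      push_cast
      rw [← hm, ← zpow_natCast, ← zpow_mul, mul_comm, zpow_mul, zpow_natCast, ← hn,
        pow_orderOf_eq_one, one_zpow]
    obtain ⟨Q, hQ⟩ := hpg.exists_le_sylow
    exact ⟨⟨⟨Q, hQ (Subgroup.mem_zpowers x)⟩⟩, inferInstance⟩

lemma mem_smul_sylow_aux {G : Type*} [Group G] {p : ℕ} (g : G) (Q : Sylow p G) (x : G) :
    x ∈ g • Q ↔ g⁻¹ * x * g ∈ Q := by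
  rw [← SetLike.mem_coe, Sylow.coe_smul, Set.mem_smul_set_iff_inv_smul_mem,
    ← map_inv MulAut.conj g, MulAut.smul_def, MulAut.conj_apply]
  simp [mul_assoc]

lemma sylCount_conj_aux {G : Type*} [Group G] (p : ℕ) (g x : G) :
    sylCount p (g * x * g⁻¹) = sylCount p x := by
  apply Nat.card_congr
  refine ⟨fun Q => ⟨g⁻¹ • Q.1, ?_⟩, fun Q => ⟨g • Q.1, ?_⟩, fun Q => ?_, fun Q => ?_⟩
  · rw [mem_smul_sylow_aux]; simpa [mul_assoc] using Q.2
  · rw [mem_smul_sylow_aux]; simpa [mul_assoc] using Q.2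
  · simp [smul_smul]
  · simp [smul_smul]


/-- `|𝔘_p(G)| = Σ_{x ∈ P} n_p(G) / λ_G(x)` (a sum of rational numbers). -/
theorem card_pElements_eq_sum_lambda {G : Type*} [Group G] [Fintype G]
    (p : ℕ) (hp : p.Prime) (P : Sylow p G) :
    (Nat.card {g : G | ∃ n : ℕ, orderOf g = p ^ n} : ℚ) =
      ∑ᶠ x ∈ ((P : Subgroup G) : Set G),
        (Nat.card (Sylow p G) : ℚ) / (sylCount p x : ℚ) := by
  haveI : Fact p.Prime := ⟨hp⟩
  classical
  have hcard : ∀ x : G, (Finset.univ.filter (fun Q : Sylow p G => x ∈ Q)).card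
      = sylCount p x := by
    intro x
    rw [sylCount, Nat.card_eq_fintype_card, Fintype.card_subtype]
  set c : Sylow p G → ℚ :=
    fun Q => ∑ x : G, if x ∈ Q then ((sylCount p x : ℚ))⁻¹ else 0 with hc
  -- LHS
  have h1 : (Nat.card {g : G | ∃ n : ℕ, orderOf g = p ^ n} : ℚ)
      = ∑ x : G, (sylCount p x : ℚ) * (sylCount p x : ℚ)⁻¹ := by
    have hx : ∀ x : G, (sylCount p x : ℚ) * (sylCount p x : ℚ)⁻¹
        = if (∃ n : ℕ, orderOf x = p ^ n) then (1 : ℚ) else 0 := by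
      intro x
      by_cases h : ∃ n : ℕ, orderOf x = p ^ n
      · have hpos : 0 < sylCount p x := (sylCount_pos_iff_aux x).2 h
        rw [if_pos h, mul_inv_cancel₀ (by exact_mod_cast hpos.ne')]
      · have h0 : sylCount p x = 0 := by
          by_contra h0
          exact h ((sylCount_pos_iff_aux x).1 (Nat.pos_of_ne_zero h0))
        rw [if_neg h, h0]; simp
    simp_rw [hx]
    rw [Finset.sum_boole]
    congr 1
    rw [Nat.card_eq_fintype_card]
    simp [Fintype.card_subtype, Set.mem_setOf_eq]
  have h2 : ∀ x : G, (sylCount p x : ℚ) * (sylCount p x : ℚ)⁻¹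
      = ∑ Q : Sylow p G, if x ∈ Q then ((sylCount p x : ℚ))⁻¹ else 0 := by
    intro x
    rw [← Finset.sum_filter, Finset.sum_const, hcard, nsmul_eq_mul]
  have h3 : ∀ Q : Sylow p G, c Q = c P := by
    intro Q
    obtain ⟨g, hg⟩ := MulAction.exists_smul_eq G P Q
    rw [hc]
    refine (Fintype.sum_equiv (MulAut.conj g).toEquiv _ _ fun y => ?_).symm
    have hmem : (MulAut.conj g) y ∈ Q ↔ y ∈ P := by
      rw [← hg, MulAut.conj_apply, mem_smul_sylow_aux]
      constructor <;> intro h <;> simpa [mul_assoc] using h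
    simp only [MulEquiv.toEquiv_eq_coe, EquivLike.coe_coe, MulAut.conj_apply] at *
    rw [sylCount_conj_aux]
    exact if_congr hmem.symm rfl rfl
  have h4 : (∑ᶠ x ∈ ((P : Subgroup G) : Set G),
      (Nat.card (Sylow p G) : ℚ) / (sylCount p x : ℚ))
      = (Nat.card (Sylow p G) : ℚ) * c P := by
    rw [← Set.coe_toFinset (((P : Subgroup G) : Set G)), finsum_mem_coe_finset]
    have ht : ((P : Subgroup G) : Set G).toFinset = Finset.univ.filter (fun x => x ∈ P) := by
      ext y; simp
    rw [ht, Finset.sum_filter, hc, Finset.mul_sum]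
    refine Finset.sum_congr rfl fun x _ => ?_
    by_cases hx : x ∈ P <;> simp [hx, div_eq_mul_inv]
  rw [h1, h4]
  simp_rw [h2]
  rw [Finset.sum_comm]
  simp_rw [← hc]
  rw [Finset.sum_congr rfl (fun Q _ => h3 Q), Finset.sum_const, Nat.card_eq_fintype_card,
    Finset.card_univ, nsmul_eq_mul]
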